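/- Let K be a field, L a Lie algebra over K, and g : ℤ → (K-submodules of L) a family satisfying: (i) ⁅g(i), g(j)⁆ ⊆ g(i+j) for all i, j ∈ ℤ; (ii) there is an integer d ≥ 1 with g(i) = 0 for all i < −d; (iii) g(k) ⊆ ⁅g(−1), g(k+1)⁆ for all k ≤ −2. Let N ≥ 0 and let h : ℤ → (K-submodules of L) satisfy: h(k) = g(k) for all k < 0; h(k) ⊆ g(k) for 0 ≤ k ≤ N; and for every k > N, h(k) = { x ∈ g(k) : ⁅x, y⁆ ∈ h(k−1) for all y ∈ g(−1) }. Suppose p : ℤ → (K-submodules of L) satisfies p(k) ⊆ g(k) for all k, ⁅p(i), p(j)⁆ ⊆ p(i+j) for all i, j, and p(k) = h(k) for all k ≤ N. Then p(k) ⊆ h(k) for all k ∈ ℤ. That is, the partial prolong h is the maximal graded subalgebra of the graded Lie algebra determined by g whose components in degrees ≤ N coincide with the given beginning part. -/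

import Mathlib

/-- The submodule spanned by all brackets `⁅a, b⁆` with `a ∈ A`, `b ∈ B`;
this formalizes `⁅A, B⁆` for submodules `A`, `B` of a Lie algebra. -/
def bracketSpan {K L : Type*} [Field K] [LieRing L] [LieAlgebra K L]
    (A B : Submodule K L) : Submodule K L :=
  Submodule.span K {x | ∃ a ∈ A, ∃ b ∈ B, x = ⁅a, b⁆}

/-- the partial prolong `h` is the maximal graded subalgebra of the
graded Lie algebra determined by `g` whose components in degrees `≤ N` coincide
with the given beginning part: any bracket-closed graded family `p` contained in
`g` with `p(k) = h(k)` for `k ≤ N` satisfies `p(k) ⊆ h(k)` for all `k`. -/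
theorem partialProlong_maximal {K L : Type*} [Field K] [LieRing L] [LieAlgebra K L]
    (g : ℤ → Submodule K L)
    (hg : ∀ i j, bracketSpan (g i) (g j) ≤ g (i + j))
    (d : ℤ) (hd : 1 ≤ d) (hdepth : ∀ i, i < -d → g i = ⊥)
    (hgen : ∀ k, k ≤ -2 → g k ≤ bracketSpan (g (-1)) (g (k + 1)))
    (N : ℤ) (hN : 0 ≤ N)
    (h : ℤ → Submodule K L)
    (hneg : ∀ k, k < 0 → h k = g k)
    (hbeg : ∀ k, 0 ≤ k → k ≤ N → h k ≤ g k)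
    (hrec : ∀ k, N < k → ∀ x,
        x ∈ h k ↔ x ∈ g k ∧ ∀ y ∈ g (-1), ⁅x, y⁆ ∈ h (k - 1))
    (p : ℤ → Submodule K L)
    (hpg : ∀ k, p k ≤ g k)
    (hpclosed : ∀ i j, bracketSpan (p i) (p j) ≤ p (i + j))
    (hph : ∀ k, k ≤ N → p k = h k) :
    ∀ k, p k ≤ h k := by
  have key : ∀ k, N ≤ k → p k ≤ h k := by
    refine Int.le_induction (motive := fun k _ => p k ≤ h k) (hph N le_rfl).le ?_
    · intro n _ ih x hx
      rw [hrec (n + 1) (by omega)]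
      refine ⟨hpg _ hx, fun y hy => ?_⟩
      have hy' : y ∈ p (-1) := by
        rw [hph (-1) (by omega), hneg (-1) (by omega)]; exact hy
      have hbr : ⁅x, y⁆ ∈ p (n + 1 + -1) :=
        hpclosed (n + 1) (-1) (Submodule.subset_span ⟨x, hx, y, hy', rfl⟩)
      have : ⁅x, y⁆ ∈ p n := by simpa using hbr
      simpa using ih this
  intro k
  rcases le_or_gt k N with hk | hk
  · exact (hph k hk).le
  · exact key k hk.le
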